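/- arXiv:1909.13448 — 2 statements merged into one kernel-verified Lean document; each statement's English description precedes it below -/
import Mathlib

section
/- For all u ≥ 0 and s ∈ [0,1) with G(u) = u⁴/4 + G₁(u), where G₁(u) = −u·cos u + sin u + 2u·sin u − (u²−2)·cos u − 2 + (1/2)(u − (1/2)sin 2u), there exist constants C, α₀ > 0 such that for α ≥ α₀ and s ∈ [0,1): |α²cos α − α²s²cos(αs)| / (α⁴(1 − s⁴)) ≤ C·α^{−1}. -/
open Real

lemma cos_lip (x y : ℝ) : |Real.cos x - Real.cos y| ≤ |x - y| := by
  rw [Real.cos_sub_cos]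
  have h1 : |Real.sin ((x + y) / 2)| ≤ 1 := Real.abs_sin_le_one _
  have h2 : |Real.sin ((x - y) / 2)| ≤ |(x - y) / 2| := Real.abs_sin_le_abs
  have h3 : |(x - y) / 2| = |x - y| / 2 := by rw [abs_div]; norm_num
  calc |(-2) * Real.sin ((x + y) / 2) * Real.sin ((x - y) / 2)|
      = 2 * (|Real.sin ((x + y) / 2)| * |Real.sin ((x - y) / 2)|) := by
        rw [abs_mul, abs_mul]; norm_num; ring
    _ ≤ 2 * (1 * (|x - y| / 2)) := by
        rw [← h3]
        gcongr
    _ = |x - y| := by ring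

theorem stmt_14 :
    ∃ C > (0:ℝ), ∃ α₀ > (0:ℝ), ∀ α : ℝ, α₀ ≤ α → ∀ s : ℝ, 0 ≤ s → s < 1 →
      |α ^ 2 * Real.cos α - α ^ 2 * s ^ 2 * Real.cos (α * s)| / (α ^ 4 * (1 - s ^ 4))
        ≤ C / α := by
  refine ⟨3, by norm_num, 1, by norm_num, fun α hα s hs hs1 => ?_⟩
  have hα0 : (0:ℝ) < α := by linarith
  have hs4 : s ^ 4 < 1 := pow_lt_one₀ hs hs1 (by norm_num)
  have hden : (0:ℝ) < α ^ 4 * (1 - s ^ 4) := by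
    have : (0:ℝ) < 1 - s ^ 4 := by linarith
    positivity
  rw [div_le_div_iff₀ hden hα0]
  have hc1 : |Real.cos α - Real.cos (α * s)| ≤ α - α * s := by
    have := cos_lip α (α * s)
    have h4 : |α - α * s| = α - α * s := abs_of_nonneg (by nlinarith)
    linarith [this, h4.le, h4.ge]
  have hc2 : |(1 - s ^ 2) * Real.cos (α * s)| ≤ 2 * (1 - s) := by
    rw [abs_mul, abs_of_nonneg (by nlinarith : (0:ℝ) ≤ 1 - s ^ 2)]
    have h5 := Real.abs_cos_le_one (α * s)
    nlinarith [abs_nonneg (Real.cos (α * s)), sq_nonneg (1 - s),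
      mul_le_mul_of_nonneg_left h5 (by nlinarith : (0:ℝ) ≤ 1 - s ^ 2)]
  have key : |α ^ 2 * Real.cos α - α ^ 2 * s ^ 2 * Real.cos (α * s)|
      ≤ α ^ 2 * ((α + 2) * (1 - s)) := by
    have h1 : α ^ 2 * Real.cos α - α ^ 2 * s ^ 2 * Real.cos (α * s)
        = α ^ 2 * ((Real.cos α - Real.cos (α * s)) + (1 - s ^ 2) * Real.cos (α * s)) := by
      ring
    rw [h1, abs_mul, abs_of_nonneg (by positivity : (0:ℝ) ≤ α ^ 2)]
    have := abs_add_le (Real.cos α - Real.cos (α * s)) ((1 - s ^ 2) * Real.cos (α * s))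
    nlinarith [sq_nonneg α]
  have h2 : 1 - s ≤ 1 - s ^ 4 := by nlinarith [mul_nonneg hs (sub_nonneg.mpr (pow_le_one₀ hs hs1.le (n := 3)))]
  have h3 : α + 2 ≤ 3 * α := by linarith
  have hfin : α ^ 2 * ((α + 2) * (1 - s)) * α ≤ 3 * (α ^ 4 * (1 - s ^ 4)) := by
    nlinarith [mul_le_mul_of_nonneg_left h2 (by positivity : (0:ℝ) ≤ 3 * α ^ 4),
      mul_le_mul_of_nonneg_right h3 (mul_nonneg (by positivity) (by linarith : (0:ℝ) ≤ 1 - s))]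
  calc |α ^ 2 * Real.cos α - α ^ 2 * s ^ 2 * Real.cos (α * s)| * α
      ≤ α ^ 2 * ((α + 2) * (1 - s)) * α := by
        apply mul_le_mul_of_nonneg_right key hα0.le
    _ ≤ 3 * (α ^ 4 * (1 - s ^ 4)) := hfin
end

section
/- There exist constants C, α₀ > 0 such that for all α ≥ α₀ and s ∈ [0,1): |α·cos α − α·s·cos(αs)|/(α⁴(1−s⁴)) ≤ C·α^{−2} and |sin α − sin(αs)|/(α⁴(1−s⁴)) ≤ C·α^{−3}. -/
open Real

theorem stmt_15 :
    ∃ C > (0:ℝ), ∃ α₀ > (0:ℝ), ∀ α : ℝ, α₀ ≤ α → ∀ s : ℝ, 0 ≤ s → s < 1 →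
      |α * Real.cos α - α * s * Real.cos (α * s)| / (α ^ 4 * (1 - s ^ 4)) ≤ C / α ^ 2 ∧
      |Real.sin α - Real.sin (α * s)| / (α ^ 4 * (1 - s ^ 4)) ≤ C / α ^ 3 := by
  refine ⟨2, by norm_num, 1, by norm_num, fun α hα s hs hs1 => ?_⟩
  have hα0 : (0:ℝ) < α := lt_of_lt_of_le one_pos hα
  have hs4 : 0 < 1 - s ^ 4 := by
    have : s ^ 4 < 1 := pow_lt_one₀ hs hs1 (by norm_num)
    linarith
  have hden : 0 < α ^ 4 * (1 - s ^ 4) := by positivity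
  have h1s : 1 - s ≤ 1 - s ^ 4 := by
    have h := mul_nonneg (mul_nonneg hs (sub_nonneg.2 hs1.le))
      (by positivity : (0:ℝ) ≤ 1 + s + s ^ 2)
    nlinarith [h]
  -- first bound via MVT
  have hf : |α * Real.cos α - α * s * Real.cos (α * s)| ≤ (α + α ^ 2) * (1 - s) := by
    have key : ∀ t ∈ Set.Icc s 1, HasDerivWithinAt (fun t => α * t * Real.cos (α * t))
        (α * Real.cos (α * t) - α ^ 2 * t * Real.sin (α * t)) (Set.Icc s 1) t := by
      intro t _
      have h1 : HasDerivAt (fun t : ℝ => α * t) α t := by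
        simpa using (hasDerivAt_id t).const_mul α
      have h2 : HasDerivAt (fun t : ℝ => Real.cos (α * t)) (-Real.sin (α * t) * α) t :=
        (Real.hasDerivAt_cos (α * t)).comp t h1
      have h3 : HasDerivAt (fun y => α * y * Real.cos (α * y))
          (α * Real.cos (α * t) + α * t * (-Real.sin (α * t) * α)) t := h1.mul h2
      have : HasDerivAt (fun t => α * t * Real.cos (α * t))
          (α * Real.cos (α * t) - α ^ 2 * t * Real.sin (α * t)) t := by
        convert h3 using 1; ring
      exact this.hasDerivWithinAt
    have bound : ∀ t ∈ Set.Icc s 1,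
        ‖α * Real.cos (α * t) - α ^ 2 * t * Real.sin (α * t)‖ ≤ α + α ^ 2 := by
      intro t ht
      have ht0 : 0 ≤ t := le_trans hs ht.1
      have ht1 : t ≤ 1 := ht.2
      have hc := Real.abs_cos_le_one (α * t)
      have hsn := Real.abs_sin_le_one (α * t)
      have e1 : |α * Real.cos (α * t)| ≤ α := by
        rw [abs_mul, abs_of_pos hα0]
        nlinarith
      have e2 : |α ^ 2 * t * Real.sin (α * t)| ≤ α ^ 2 := by
        rw [abs_mul, abs_mul, abs_of_pos (pow_pos hα0 2), abs_of_nonneg ht0]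
        have h1 : t * |Real.sin (α * t)| ≤ 1 := mul_le_one₀ ht1 (abs_nonneg _) hsn
        nlinarith [mul_le_mul_of_nonneg_left h1 (le_of_lt (pow_pos hα0 2))]
      calc ‖α * Real.cos (α * t) - α ^ 2 * t * Real.sin (α * t)‖
          ≤ |α * Real.cos (α * t)| + |α ^ 2 * t * Real.sin (α * t)| := abs_sub _ _
        _ ≤ α + α ^ 2 := add_le_add e1 e2
    have hxs : s ∈ Set.Icc s 1 := ⟨le_refl s, le_of_lt hs1⟩
    have hys : (1:ℝ) ∈ Set.Icc s 1 := ⟨le_of_lt hs1, le_refl 1⟩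
    have := (convex_Icc s 1).norm_image_sub_le_of_norm_hasDerivWithin_le key bound hxs hys
    simp only [Real.norm_eq_abs, mul_one] at this
    calc |α * Real.cos α - α * s * Real.cos (α * s)| ≤ (α + α ^ 2) * |1 - s| := this
      _ = (α + α ^ 2) * (1 - s) := by rw [abs_of_nonneg (by linarith)]
  -- second bound via Lipschitz
  have hg : |Real.sin α - Real.sin (α * s)| ≤ α * (1 - s) := by
    have key : ∀ t ∈ Set.Icc s 1, HasDerivWithinAt (fun t => Real.sin (α * t))
        (Real.cos (α * t) * α) (Set.Icc s 1) t := by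
      intro t _
      have h1 : HasDerivAt (fun t : ℝ => α * t) α t := by
        simpa using (hasDerivAt_id t).const_mul α
      exact ((Real.hasDerivAt_sin (α * t)).comp t h1).hasDerivWithinAt
    have bound : ∀ t ∈ Set.Icc s 1, ‖Real.cos (α * t) * α‖ ≤ α := by
      intro t _
      rw [Real.norm_eq_abs, abs_mul, abs_of_pos hα0]
      nlinarith [Real.abs_cos_le_one (α * t)]
    have hxs : s ∈ Set.Icc s 1 := ⟨le_refl s, le_of_lt hs1⟩
    have hys : (1:ℝ) ∈ Set.Icc s 1 := ⟨le_of_lt hs1, le_refl 1⟩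
    have := (convex_Icc s 1).norm_image_sub_le_of_norm_hasDerivWithin_le key bound hxs hys
    simp only [Real.norm_eq_abs, mul_one] at this
    calc |Real.sin α - Real.sin (α * s)| ≤ α * |1 - s| := this
      _ = α * (1 - s) := by rw [abs_of_nonneg (by linarith)]
  constructor
  · rw [div_le_div_iff₀ hden (pow_pos hα0 2)]
    have habs : 0 ≤ |α * Real.cos α - α * s * Real.cos (α * s)| := abs_nonneg _
    have hα1 : (1:ℝ) ≤ α := hα
    have h2 : (α + α ^ 2) * (1 - s) ≤ 2 * α ^ 2 * (1 - s ^ 4) :=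
      mul_le_mul (by nlinarith) h1s (by linarith) (by positivity)
    nlinarith [sq_nonneg α, pow_pos hα0 2, pow_pos hα0 4,
      mul_le_mul_of_nonneg_right (le_trans hf h2) (le_of_lt (pow_pos hα0 2))]
  · rw [div_le_div_iff₀ hden (pow_pos hα0 3)]
    have hα1 : (1:ℝ) ≤ α := hα
    have h2 : α * (1 - s) ≤ 2 * α * (1 - s ^ 4) := by nlinarith
    nlinarith [pow_pos hα0 3, pow_pos hα0 4,
      mul_le_mul_of_nonneg_right (le_trans hg h2) (le_of_lt (pow_pos hα0 3))]
end
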